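/- Let X be a Hausdorff topological real vector space, 0 < p < 1, and x ∈ X a nonzero vector. Then the closure of the p-convex hull of {x} equals { t·x : t ∈ [0, 1] }. -/

import Mathlib

open scoped Pointwise

/-- A set `A` is `p`-convex if for all `x y ∈ A` and `s, t ∈ [0,1]` with
`s^p + t^p = 1`, the point `s^(1/p) • x + t^(1/p) • y` belongs to `A`. -/
def PConvex {X : Type*} [AddCommGroup X] [Module ℝ X] (p : ℝ) (A : Set X) : Prop :=
  ∀ x ∈ A, ∀ y ∈ A, ∀ s t : ℝ, s ∈ Set.Icc (0:ℝ) 1 → t ∈ Set.Icc (0:ℝ) 1 →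
    s ^ p + t ^ p = 1 → s ^ (1/p) • x + t ^ (1/p) • y ∈ A


/-- The `p`-convex hull of a set: the smallest `p`-convex set containing it. -/
def pConvexHull {X : Type*} [AddCommGroup X] [Module ℝ X] (p : ℝ) (S : Set X) : Set X :=
  ⋂₀ {B : Set X | PConvex p B ∧ S ⊆ B}

lemma pConvex_pConvexHull {X : Type*} [AddCommGroup X] [Module ℝ X] (p : ℝ) (S : Set X) :
    PConvex p (pConvexHull p S) := by
  intro a ha b hb s t hs ht hst B hB
  exact hB.1 a (ha B hB) b (hb B hB) s t hs ht hst

lemma subset_pConvexHull {X : Type*} [AddCommGroup X] [Module ℝ X] (p : ℝ) (S : Set X) :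
    S ⊆ pConvexHull p S := fun z hz B hB => hB.2 hz

lemma pConvexHull_min {X : Type*} [AddCommGroup X] [Module ℝ X] {p : ℝ} {S B : Set X}
    (hB : PConvex p B) (hSB : S ⊆ B) : pConvexHull p S ⊆ B :=
  Set.sInter_subset_of_mem ⟨hB, hSB⟩

theorem stmt5 {X : Type*} [AddCommGroup X] [Module ℝ X] [TopologicalSpace X]
    [IsTopologicalAddGroup X] [ContinuousSMul ℝ X] [T2Space X]
    {p : ℝ} (hp : 0 < p) (hp1 : p < 1) {x : X} (hx : x ≠ 0) :
    closure (pConvexHull p {x}) = {y : X | ∃ t : ℝ, 0 ≤ t ∧ t ≤ 1 ∧ y = t • x} := by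
  have hpne : p ≠ 0 := hp.ne'
  have hqpos : 0 < 1 / p := by positivity
  have hqne : (1 / p) ≠ 0 := hqpos.ne'
  -- the segment
  set Seg : Set X := {y : X | ∃ t : ℝ, 0 ≤ t ∧ t ≤ 1 ∧ y = t • x} with hSeg
  have hcont : Continuous (fun t : ℝ => t • x) := continuous_id.smul continuous_const
  -- auxiliary: s^(1/p) ≤ s^p for s ∈ [0,1]
  have hexp : ∀ s : ℝ, 0 ≤ s → s ≤ 1 → s ^ (1/p) ≤ s ^ p := by
    intro s hs0 hs1
    rcases eq_or_lt_of_le hs0 with h | h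
    · rw [← h, Real.zero_rpow hqne, Real.zero_rpow hpne]
    · exact Real.rpow_le_rpow_of_exponent_ge h hs1
        (by rw [le_div_iff₀ hp]; nlinarith)
  -- Part 1: hull ⊆ Seg
  have hSegPC : PConvex p Seg := by
    rintro a ⟨α, hα0, hα1, rfl⟩ b ⟨β, hβ0, hβ1, rfl⟩ s t ⟨hs0, hs1⟩ ⟨ht0, ht1⟩ hst
    refine ⟨s ^ (1/p) * α + t ^ (1/p) * β, by positivity, ?_, ?_⟩
    · calc s ^ (1/p) * α + t ^ (1/p) * β ≤ s ^ (1/p) * 1 + t ^ (1/p) * 1 := by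
            gcongr <;> first | exact Real.rpow_nonneg (by assumption) _ | assumption
        _ = s ^ (1/p) + t ^ (1/p) := by ring
        _ ≤ s ^ p + t ^ p := add_le_add (hexp s hs0 hs1) (hexp t ht0 ht1)
        _ = 1 := hst
    · rw [smul_smul, smul_smul, ← add_smul]
  have hhullSeg : pConvexHull p {x} ⊆ Seg :=
    pConvexHull_min hSegPC (fun z hz =>
      ⟨1, zero_le_one, le_refl 1, by rw [Set.mem_singleton_iff.mp hz, one_smul]⟩)
  have hSegClosed : IsClosed Seg := by
    have : Seg = (fun t : ℝ => t • x) '' Set.Icc 0 1 := by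
      ext y
      constructor
      · rintro ⟨t, ht0, ht1, rfl⟩; exact ⟨t, ⟨ht0, ht1⟩, rfl⟩
      · rintro ⟨t, ⟨ht0, ht1⟩, rfl⟩; exact ⟨t, ht0, ht1, rfl⟩
    rw [this]
    exact (isCompact_Icc.image hcont).isClosed
  -- Part 2: segment points with positive coefficient are in the hull
  have hxmem : x ∈ pConvexHull p {x} := subset_pConvexHull p {x} rfl
  -- the multiplier function
  set m : ℝ → ℝ := fun u => (u ^ (1/p)) ^ (1/p) + ((1 - u) ^ (1/p)) ^ (1/p) with hm
  have hstep : ∀ α : ℝ, α • x ∈ pConvexHull p {x} → ∀ u : ℝ, 0 ≤ u → u ≤ 1 →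
      (m u * α) • x ∈ pConvexHull p {x} := by
    intro α hα u hu0 hu1
    have hs0 : (0:ℝ) ≤ u ^ (1/p) := Real.rpow_nonneg hu0 _
    have ht0 : (0:ℝ) ≤ (1 - u) ^ (1/p) := Real.rpow_nonneg (by linarith) _
    have key := pConvex_pConvexHull p {x} (α • x) hα (α • x) hα
      (u ^ (1/p)) ((1 - u) ^ (1/p))
      ⟨hs0, Real.rpow_le_one hu0 hu1 hqpos.le⟩
      ⟨ht0, Real.rpow_le_one (by linarith) (by linarith) hqpos.le⟩
      (by
        rw [← Real.rpow_mul hu0, ← Real.rpow_mul (by linarith : (0:ℝ) ≤ 1 - u),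
          one_div_mul_cancel hpne, Real.rpow_one, Real.rpow_one]
        ring)
    have heq : (u ^ (1/p)) ^ (1/p) • (α • x) + ((1 - u) ^ (1/p)) ^ (1/p) • (α • x)
        = (m u * α) • x := by
      rw [smul_smul, smul_smul, ← add_smul]
      congr 1
      simp only [hm]
      ring
    rwa [heq] at key
  -- continuity of m
  have hrc : Continuous (fun v : ℝ => v ^ (1/p)) := by
    rw [continuous_iff_continuousAt]
    intro v
    exact Real.continuousAt_rpow_const v (1/p) (Or.inr hqpos.le)
  have hmc : Continuous m := by
    apply Continuous.add
    · exact hrc.comp hrc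
    · exact (hrc.comp hrc).comp (continuous_const.sub continuous_id)
  have hm1 : m 1 = 1 := by
    simp only [hm, sub_self, Real.one_rpow, Real.zero_rpow hqne]
    norm_num
  -- the contraction constant
  set c : ℝ := m (1/2) with hc
  have hhalf : (0:ℝ) < (1/2 : ℝ) ^ (1/p) := Real.rpow_pos_of_pos (by norm_num) _
  have hc0 : 0 < c := by
    rw [hc, hm]
    show (0:ℝ) < ((1/2 : ℝ) ^ (1/p)) ^ (1/p) + (((1:ℝ) - 1/2) ^ (1/p)) ^ (1/p)
    have h1 : (0:ℝ) < ((1/2 : ℝ) ^ (1/p)) ^ (1/p) := Real.rpow_pos_of_pos hhalf _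
    have h2 : (0:ℝ) < (((1:ℝ) - 1/2) ^ (1/p)) ^ (1/p) :=
      Real.rpow_pos_of_pos (Real.rpow_pos_of_pos (by norm_num) _) _
    linarith
  have hc1 : c < 1 := by
    have h2 : ((1/2 : ℝ) ^ (1/p)) ^ (1/p) = (1/2 : ℝ) ^ (1/p * (1/p)) :=
      (Real.rpow_mul (by norm_num) _ _).symm
    have hexp1 : (1:ℝ) < 1/p * (1/p) := by
      rw [div_mul_div_comm, one_mul, lt_div_iff₀ (by positivity)]
      nlinarith
    have : (1/2 : ℝ) ^ (1/p * (1/p)) < (1/2 : ℝ) ^ (1:ℝ) :=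
      Real.rpow_lt_rpow_of_exponent_gt (by norm_num) (by norm_num) hexp1
    rw [Real.rpow_one] at this
    rw [hc, hm]
    show ((1/2 : ℝ) ^ (1/p)) ^ (1/p) + (((1:ℝ) - 1/2) ^ (1/p)) ^ (1/p) < 1
    rw [show (1:ℝ) - 1/2 = 1/2 by norm_num, h2]
    linarith
  -- intermediate value theorem
  have hIVT : Set.Icc c 1 ⊆ m '' Set.Icc (1/2 : ℝ) 1 := by
    have := intermediate_value_Icc (by norm_num : (1/2 : ℝ) ≤ 1) hmc.continuousOn
    rwa [hm1] at this
  -- main induction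
  have hkey : ∀ n : ℕ, ∀ t : ℝ, c ^ n ≤ t → t ≤ 1 → t • x ∈ pConvexHull p {x} := by
    intro n
    induction n with
    | zero =>
      intro t ht1 ht2
      simp only [pow_zero] at ht1
      have : t = 1 := le_antisymm ht2 ht1
      rw [this, one_smul]
      exact hxmem
    | succ n ih =>
      intro t ht1 ht2
      by_cases h : c ^ n ≤ t
      · exact ih t h ht2
      · push_neg at h
        have hcn : (0:ℝ) < c ^ n := pow_pos hc0 n
        have hcn1 : c ^ n ≤ 1 := pow_le_one₀ hc0.le hc1.le
        set r : ℝ := t / c ^ n with hr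
        have hr1 : r ≤ 1 := (div_le_one hcn).mpr h.le
        have hr2 : c ≤ r := by
          rw [hr, le_div_iff₀ hcn]
          calc c * c ^ n = c ^ (n + 1) := (pow_succ' c n).symm
            _ ≤ t := ht1
        obtain ⟨u, hu, hmu⟩ := hIVT ⟨hr2, hr1⟩
        have hcnx : (c ^ n) • x ∈ pConvexHull p {x} := ih (c ^ n) le_rfl hcn1
        have := hstep (c ^ n) hcnx u (by linarith [hu.1]) hu.2
        rw [hmu] at this
        rwa [hr, div_mul_cancel₀ t hcn.ne'] at this
  -- (0,1] coefficients are in the hull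
  have hIoc : (fun t : ℝ => t • x) '' Set.Ioc 0 1 ⊆ pConvexHull p {x} := by
    rintro y ⟨t, ⟨ht0, ht1⟩, rfl⟩
    obtain ⟨n, hn⟩ := exists_pow_lt_of_lt_one ht0 hc1
    exact hkey n t hn.le ht1
  -- conclude
  apply le_antisymm
  · exact closure_minimal hhullSeg hSegClosed
  · rintro y ⟨t, ht0, ht1, rfl⟩
    have htc : t ∈ closure (Set.Ioc (0:ℝ) 1) := by
      rw [closure_Ioc one_ne_zero.symm]
      exact ⟨ht0, ht1⟩
    have : t • x ∈ (fun t : ℝ => t • x) '' closure (Set.Ioc (0:ℝ) 1) :=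
      ⟨t, htc, rfl⟩
    have h1 : t • x ∈ closure ((fun t : ℝ => t • x) '' Set.Ioc (0:ℝ) 1) :=
      image_closure_subset_closure_image hcont this
    exact closure_mono hIoc h1
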